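/- Let N be a rank-3 simple oriented matroid on F = {1,…,m} with m ≥ 5 such that both restrictions N|_{F∖{1}} and N|_{F∖{m}} are rank-3 matroid polytopes. Then N is acyclic. -/
import Mathlib


/-- Chirotope axioms (B1)-(B3) for a map `χ : E^r → {−1,0,1}` (values in ℤ). -/
def IsChirotope {E : Type*} {r : ℕ} (χ : (Fin r → E) → ℤ) : Prop :=
  (∀ t, χ t = 1 ∨ χ t = 0 ∨ χ t = -1) ∧
  (∃ t, χ t ≠ 0) ∧
  (∀ (t : Fin r → E) (τ : Equiv.Perm (Fin r)), χ (t ∘ ⇑τ) = ((Equiv.Perm.sign τ : ℤˣ) : ℤ) * χ t) ∧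
  (∀ (i₀ : Fin r) (x y : Fin r → E),
    (∀ s : Fin r, 0 ≤ χ (Function.update x i₀ (y s)) * χ (Function.update y s (x i₀))) →
    0 ≤ χ x * χ y)

/-- Cocircuits of the oriented matroid with chirotope `χ`: the nonzero sign vectors of the
form `x ↦ χ(t₁,…,x,…,t_r)`. -/
def IsCocircuit {E : Type*} {r : ℕ} (χ : (Fin r → E) → ℤ) (c : E → ℤ) : Prop :=
  c ≠ 0 ∧ ∃ (i : Fin r) (t : Fin r → E), c = fun x => χ (Function.update t i x)

/-- Circuits of the oriented matroid with chirotope `χ`. -/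
def IsCircuit {E : Type*} {r : ℕ} (χ : (Fin r → E) → ℤ) (c : E → ℤ) : Prop :=
  c ≠ 0 ∧ ∃ t : Fin (r + 1) → E,
    (∀ i, c (t i) = (-1) ^ (i : ℕ) * χ (fun j => t (i.succAbove j))) ∧
    (∀ x, (∀ i, t i ≠ x) → c x = 0)

/-- Closure of a set of sign vectors under composition `X ∘ Y`. -/
inductive SignComp {E : Type*} (B : (E → ℤ) → Prop) : (E → ℤ) → Prop
  | zero : SignComp B 0
  | base (c : E → ℤ) : B c → SignComp B c
  | comp (X Y : E → ℤ) : SignComp B X → SignComp B Y →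
      SignComp B (fun e => if X e = 0 then Y e else X e)

/-- Covectors: compositions of cocircuits. -/
def IsCovector {E : Type*} {r : ℕ} (χ : (Fin r → E) → ℤ) : (E → ℤ) → Prop :=
  SignComp (IsCocircuit χ)

/-- Vectors: compositions of circuits. -/
def IsVector {E : Type*} {r : ℕ} (χ : (Fin r → E) → ℤ) : (E → ℤ) → Prop :=
  SignComp (IsCircuit χ)

/-- No loops: every element lies in some basis. -/
def OMLoopless {E : Type*} {r : ℕ} (χ : (Fin r → E) → ℤ) : Prop :=
  ∀ e : E, ∃ t, χ t ≠ 0 ∧ ∃ i, t i = e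

/-- Simplicity: no loops and no two distinct parallel or antiparallel elements. -/
def OMSimple {E : Type*} {r : ℕ} (χ : (Fin r → E) → ℤ) : Prop :=
  OMLoopless χ ∧ ∀ e f : E, e ≠ f → ∃ t, χ t ≠ 0 ∧ ∃ i j, i ≠ j ∧ t i = e ∧ t j = f

/-- Acyclicity: existence of the all-positive covector. -/
def OMAcyclic {E : Type*} {r : ℕ} (χ : (Fin r → E) → ℤ) : Prop :=
  ∃ X, IsCovector χ X ∧ ∀ e, X e = 1

/-- Extreme point of an acyclic oriented matroid. -/
def IsExtremePoint {E : Type*} {r : ℕ} (χ : (Fin r → E) → ℤ) (e : E) : Prop :=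
  ∃ c, IsCocircuit χ c ∧ c e = 0 ∧ ∀ f, f ≠ e → c f = 1

/-- Rotational symmetry of the oriented matroid with chirotope `χ`. -/
def IsRotSym {E : Type*} {r : ℕ} (χ : (Fin r → E) → ℤ) (σ : Equiv.Perm E) : Prop :=
  ∀ t, χ (⇑σ ∘ t) = χ t


private def osign (x y z : ℕ) : ℤ :=
  if x < y then (if y < z then 1 else if x < z then -1 else 1)
  else (if x < z then -1 else if y < z then 1 else -1)

private lemma sideF (a b c d : ℕ) (h : osign a b c = 1) :
    (osign a b d = 1 ∧ osign a c d = 1 ∧ osign b c d = 1) ∨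
    (osign a b d = 1 ∧ osign a c d = -1 ∧ osign b c d = -1) ∨
    (osign a b d = -1 ∧ osign a c d = -1 ∧ osign b c d = 1) := by
  unfold osign at *; split_ifs at * <;> omega

private lemma sideE (a b c d : ℕ) (h : osign a b c = -1) :
    (osign a b d = -1 ∧ osign a c d = 1 ∧ osign b c d = 1) ∨
    (osign a b d = 1 ∧ osign a c d = 1 ∧ osign b c d = -1) ∨
    (osign a b d = -1 ∧ osign a c d = -1 ∧ osign b c d = -1) := by
  unfold osign at *; split_ifs at * <;> omega

section OMAux

variable {E : Type*} (χ : (Fin 3 → E) → ℤ)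
  (hperm : ∀ (t : Fin 3 → E) (τ : Equiv.Perm (Fin 3)),
    χ (t ∘ ⇑τ) = ((Equiv.Perm.sign τ : ℤˣ) : ℤ) * χ t)

private lemma del0 (t : Fin 4 → E) :
    (fun j => t ((0 : Fin 4).succAbove j)) = ![t 1, t 2, t 3] := by
  funext j; fin_cases j <;> rfl
private lemma del1 (t : Fin 4 → E) :
    (fun j => t ((1 : Fin 4).succAbove j)) = ![t 0, t 2, t 3] := by
  funext j; fin_cases j <;> rfl
private lemma del2 (t : Fin 4 → E) :
    (fun j => t ((2 : Fin 4).succAbove j)) = ![t 0, t 1, t 3] := by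
  funext j; fin_cases j <;> rfl
private lemma del3 (t : Fin 4 → E) :
    (fun j => t ((3 : Fin 4).succAbove j)) = ![t 0, t 1, t 2] := by
  funext j; fin_cases j <;> rfl

private lemma upd0 (a b c v : E) : Function.update ![a, b, c] 0 v = ![v, b, c] := by
  funext j; fin_cases j <;> simp [Function.update]
private lemma upd1 (a b c v : E) : Function.update ![a, b, c] 1 v = ![a, v, c] := by
  funext j; fin_cases j <;> simp [Function.update]
private lemma upd2 (a b c v : E) : Function.update ![a, b, c] 2 v = ![a, b, v] := by
  funext j; fin_cases j <;> simp [Function.update]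

private lemma signcomp_neg {B : (E → ℤ) → Prop} (hB : ∀ c, B c → ∃ e, c e < 0)
    {v : E → ℤ} (hv : SignComp B v) (hv0 : v ≠ 0) : ∃ e, v e < 0 := by
  induction hv with
  | zero => exact absurd rfl hv0
  | base c hc => exact hB c hc
  | comp X Y hX hY ihX ihY =>
    by_cases hX0 : X = 0
    · subst hX0
      simp only [Pi.zero_apply, if_pos rfl] at hv0 ⊢
      exact ihY (by intro h; exact hv0 (by funext e; simp [congrFun h e]))
    · obtain ⟨e, he⟩ := ihX hX0
      exact ⟨e, by simp [show X e ≠ 0 by omega]; omega⟩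

include hperm

private lemma chi_swap01 (a b c : E) : χ ![b, a, c] = -χ ![a, b, c] := by
  have h := hperm ![a, b, c] (Equiv.swap 0 1)
  have he : (![a, b, c] ∘ ⇑(Equiv.swap (0:Fin 3) 1)) = ![b, a, c] := by
    funext i; fin_cases i <;> simp [Equiv.swap_apply_def]
  rw [he] at h
  simp [Equiv.Perm.sign_swap (by decide : (0:Fin 3) ≠ 1)] at h
  linarith

private lemma chi_swap12 (a b c : E) : χ ![a, c, b] = -χ ![a, b, c] := by
  have h := hperm ![a, b, c] (Equiv.swap 1 2)
  have he : (![a, b, c] ∘ ⇑(Equiv.swap (1:Fin 3) 2)) = ![a, c, b] := by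
    funext i; fin_cases i <;> simp [Equiv.swap_apply_def]
  rw [he] at h
  simp [Equiv.Perm.sign_swap (by decide : (1:Fin 3) ≠ 2)] at h
  linarith

private lemma chi_cyc (a b c : E) : χ ![c, a, b] = χ ![a, b, c] := by
  have h1 := chi_swap01 χ hperm a c b
  have h2 := chi_swap12 χ hperm a b c
  have h4 := chi_swap01 χ hperm c a b
  linarith

private lemma chi_rep (t : Fin 3 → E) (i j : Fin 3) (hij : i ≠ j) (h : t i = t j) :
    χ t = 0 := by
  have he : t ∘ ⇑(Equiv.swap i j) = t := by
    funext k
    rcases eq_or_ne k i with rfl | hki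
    · simp [Equiv.swap_apply_left, h]
    rcases eq_or_ne k j with rfl | hkj
    · simp [Equiv.swap_apply_right, h]
    · simp [Equiv.swap_apply_of_ne_of_ne hki hkj]
  have hh := hperm t (Equiv.swap i j)
  rw [he, Equiv.Perm.sign_swap hij] at hh
  simp at hh
  linarith

private lemma alt_eval (g : E → ℕ) (a b c : E)
    (halt : ∀ p q r : E, p ∈ ({a, b, c} : Set E) → q ∈ ({a, b, c} : Set E) →
      r ∈ ({a, b, c} : Set E) → g p < g q → g q < g r → χ ![p, q, r] = 1)
    (hab : g a ≠ g b) (hac : g a ≠ g c) (hbc : g b ≠ g c) :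
    χ ![a, b, c] = osign (g a) (g b) (g c) := by
  unfold osign
  split_ifs with h1 h2 h3 h4 h5
  · exact halt a b c (by simp) (by simp) (by simp) h1 h2
  · have hv := halt a c b (by simp) (by simp) (by simp) (by omega) (by omega)
    have e := chi_swap12 χ hperm a b c
    omega
  · have hv := halt c a b (by simp) (by simp) (by simp) (by omega) (by omega)
    have e := chi_cyc χ hperm a b c
    omega
  · have hv := halt b a c (by simp) (by simp) (by simp) (by omega) (by omega)
    have e := chi_swap01 χ hperm a b c
    omega
  · have hv := halt b c a (by simp) (by simp) (by simp) (by omega) (by omega)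
    have e := chi_cyc χ hperm b c a
    omega
  · have hv := halt c b a (by simp) (by simp) (by simp) (by omega) (by omega)
    have e1 := chi_cyc χ hperm b a c
    have e2 := chi_swap01 χ hperm a b c
    omega

private lemma circuit_inj (c : E → ℤ) (t : Fin 4 → E)
    (hc0 : c ≠ 0)
    (heq : ∀ i : Fin 4, c (t i) = (-1) ^ (i : ℕ) * χ (fun j => t (i.succAbove j)))
    (hout : ∀ x, (∀ i, t i ≠ x) → c x = 0) :
    Function.Injective t := by
  intro i j tij
  by_contra hij
  have h0 := heq 0; have h1 := heq 1; have h2 := heq 2; have h3 := heq 3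
  rw [del0] at h0; rw [del1] at h1; rw [del2] at h2; rw [del3] at h3
  simp only [Fin.val_zero, Fin.val_one, Fin.val_two,
    show ((3:Fin 4):ℕ)=3 from rfl] at h0 h1 h2 h3
  norm_num at h0 h1 h2 h3
  have hpair : c (t i) = 0 := by
    have hfour : ∀ k : Fin 4, k = 0 ∨ k = 1 ∨ k = 2 ∨ k = 3 := by decide
    rcases hfour i with rfl|rfl|rfl|rfl <;> rcases hfour j with rfl|rfl|rfl|rfl <;>
      first
      | exact absurd rfl hij
      | (simp only [tij] at h0 h1 h2 h3 ⊢
         first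
         | omega
         | (have e := chi_swap01 χ hperm (t 1) (t 2) (t 3); omega)
         | (have e := chi_cyc χ hperm (t 1) (t 2) (t 3); omega)
         | (have e := chi_swap12 χ hperm (t 0) (t 2) (t 3); omega)
         | (have e := chi_swap12 χ hperm (t 0) (t 1) (t 2); omega)
         | (have e := chi_cyc χ hperm (t 1) (t 2) (t 0); omega)
         | (have e := chi_swap01 χ hperm (t 0) (t 1) (t 3); omega))
  have hzero : ∀ k : Fin 4, c (t k) = 0 := by
    intro k
    by_cases hki : t k = t i
    · rw [hki]; exact hpair
    by_cases hkj : t k = t j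
    · rw [hkj, ← tij]; exact hpair
    · have hki' : i ≠ k := fun h => hki (by rw [h])
      have hkj' : j ≠ k := fun h => hkj (by rw [h])
      obtain ⟨i', hi'⟩ := Fin.exists_succAbove_eq hki'
      obtain ⟨j', hj'⟩ := Fin.exists_succAbove_eq hkj'
      have hij' : i' ≠ j' := by
        intro h; apply hij; rw [← hi', ← hj', h]
      have : χ (fun j'' => t (k.succAbove j'')) = 0 := by
        apply chi_rep χ hperm _ i' j' hij'
        simp only [hi', hj', tij]
      rw [heq k, this, mul_zero]
  apply hc0
  funext x
  by_cases hx : ∀ k : Fin 4, t k ≠ x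
  · exact hout x hx
  · push_neg at hx; obtain ⟨k, rfl⟩ := hx; exact hzero k

variable (hB3 : ∀ (i₀ : Fin 3) (x y : Fin 3 → E),
    (∀ s : Fin 3, 0 ≤ χ (Function.update x i₀ (y s)) * χ (Function.update y s (x i₀))) →
    0 ≤ χ x * χ y)

include hB3

private lemma pat0 (e f x y z : E)
    (hfxy : χ ![f,x,y] = 1) (hexy : χ ![e,x,y] = -1)
    (hQ : 0 ≤ χ ![e,f,y])
    (k3 : χ ![f,y,z] = 1) (k4 : χ ![x,y,z] = 1) (k7 : χ ![e,y,z] = 1) : False := by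
  have hcon := hB3 0 ![e,x,y] ![f,y,z] ?_
  · rw [hexy, k3] at hcon; norm_num at hcon
  · intro s
    fin_cases s
    · show 0 ≤ χ (Function.update ![e,x,y] 0 f) * χ (Function.update ![f,y,z] 0 e)
      rw [upd0, upd0, hfxy, k7]; norm_num
    · show 0 ≤ χ (Function.update ![e,x,y] 0 y) * χ (Function.update ![f,y,z] 1 e)
      rw [upd0, upd1, chi_rep χ hperm ![y,x,y] 0 2 (by decide) rfl]; norm_num
    · show 0 ≤ χ (Function.update ![e,x,y] 0 z) * χ (Function.update ![f,y,z] 2 e)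
      rw [upd0, upd2]
      have e1 : χ ![z,x,y] = χ ![x,y,z] := chi_cyc χ hperm x y z
      have e2 : χ ![f,y,e] = χ ![e,f,y] := by
        rw [chi_cyc χ hperm y e f, chi_cyc χ hperm e f y]
      rw [e1, e2, k4]; linarith

private lemma pat1 (e f x y z : E)
    (hfxy : χ ![f,x,y] = 1) (hexy : χ ![e,x,y] = -1)
    (hP : χ ![e,f,x] ≤ 0)
    (k2 : χ ![f,x,z] = 1) (k4 : χ ![x,y,z] = -1) (k6 : χ ![e,x,z] = 1) : False := by
  have hcon := hB3 0 ![e,x,y] ![f,x,z] ?_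
  · rw [hexy, k2] at hcon; norm_num at hcon
  · intro s
    fin_cases s
    · show 0 ≤ χ (Function.update ![e,x,y] 0 f) * χ (Function.update ![f,x,z] 0 e)
      rw [upd0, upd0, hfxy, k6]; norm_num
    · show 0 ≤ χ (Function.update ![e,x,y] 0 x) * χ (Function.update ![f,x,z] 1 e)
      rw [upd0, upd1, chi_rep χ hperm ![x,x,y] 0 1 (by decide) rfl]; norm_num
    · show 0 ≤ χ (Function.update ![e,x,y] 0 z) * χ (Function.update ![f,x,z] 2 e)
      rw [upd0, upd2]
      have e1 : χ ![z,x,y] = χ ![x,y,z] := chi_cyc χ hperm x y z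
      have e2 : χ ![f,x,e] = χ ![e,f,x] := by
        rw [chi_cyc χ hperm x e f, chi_cyc χ hperm e f x]
      rw [e1, e2, k4]; nlinarith

private lemma pat2 (e f x y z : E)
    (hfxy : χ ![f,x,y] = 1) (hexy : χ ![e,x,y] = -1)
    (hQ : 0 ≤ χ ![e,f,y])
    (k3 : χ ![f,y,z] = -1) (k4 : χ ![x,y,z] = -1) (k7 : χ ![e,y,z] = -1) : False := by
  have hcon := hB3 0 ![e,x,y] ![f,z,y] ?_
  · have e3 : χ ![f,z,y] = -χ ![f,y,z] := chi_swap12 χ hperm f y z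
    rw [hexy, e3, k3] at hcon; norm_num at hcon
  · intro s
    fin_cases s
    · show 0 ≤ χ (Function.update ![e,x,y] 0 f) * χ (Function.update ![f,z,y] 0 e)
      have e1 : χ ![e,z,y] = -χ ![e,y,z] := chi_swap12 χ hperm e y z
      rw [upd0, upd0, hfxy, e1, k7]; norm_num
    · show 0 ≤ χ (Function.update ![e,x,y] 0 z) * χ (Function.update ![f,z,y] 1 e)
      rw [upd0, upd1]
      have e1 : χ ![z,x,y] = χ ![x,y,z] := chi_cyc χ hperm x y z
      have e2 : χ ![f,e,y] = -χ ![e,f,y] := chi_swap01 χ hperm e f y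
      rw [e1, e2, k4]; nlinarith
    · show 0 ≤ χ (Function.update ![e,x,y] 0 y) * χ (Function.update ![f,z,y] 2 e)
      rw [upd0, chi_rep χ hperm ![y,x,y] 0 2 (by decide) rfl]; norm_num

private lemma pat3 (e f x y z : E)
    (hfxy : χ ![f,x,y] = 1) (hexy : χ ![e,x,y] = -1)
    (hP : χ ![e,f,x] ≤ 0)
    (k2 : χ ![f,x,z] = -1) (k4 : χ ![x,y,z] = 1) (k6 : χ ![e,x,z] = -1) : False := by
  have hcon := hB3 0 ![e,x,y] ![f,z,x] ?_
  · have e3 : χ ![f,z,x] = -χ ![f,x,z] := chi_swap12 χ hperm f x z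
    rw [hexy, e3, k2] at hcon; norm_num at hcon
  · intro s
    fin_cases s
    · show 0 ≤ χ (Function.update ![e,x,y] 0 f) * χ (Function.update ![f,z,x] 0 e)
      have e1 : χ ![e,z,x] = -χ ![e,x,z] := chi_swap12 χ hperm e x z
      rw [upd0, upd0, hfxy, e1, k6]; norm_num
    · show 0 ≤ χ (Function.update ![e,x,y] 0 z) * χ (Function.update ![f,z,x] 1 e)
      rw [upd0, upd1]
      have e1 : χ ![z,x,y] = χ ![x,y,z] := chi_cyc χ hperm x y z
      have e2 : χ ![f,e,x] = -χ ![e,f,x] := chi_swap01 χ hperm e f x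
      rw [e1, e2, k4]; nlinarith
    · show 0 ≤ χ (Function.update ![e,x,y] 0 x) * χ (Function.update ![f,z,x] 2 e)
      rw [upd0, chi_rep χ hperm ![x,x,y] 0 1 (by decide) rfl]; norm_num

end OMAux

set_option maxHeartbeats 2000000

/-- If `N` is a simple rank-3 oriented matroid on `{0,…,m−1}` (`m ≥ 5`) such that the
restrictions obtained by deleting the first and the last element are rank-3 matroid
polytopes (i.e. relabelings of alternating matroids), then `N` is acyclic: it has no
nonzero nonnegative vector. -/
theorem rank3_with_two_polytope_deletions_is_acyclic
    (m : ℕ) (hm : 5 ≤ m)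
    (χ : (Fin 3 → Fin m) → ℤ) (hχ : IsChirotope χ) (hsimple : OMSimple χ)
    (h1 : ∃ g : Fin m → ℕ, Set.InjOn g {x : Fin m | x ≠ ⟨0, by omega⟩} ∧
        ∀ x y z : Fin m, x ≠ ⟨0, by omega⟩ → y ≠ ⟨0, by omega⟩ → z ≠ ⟨0, by omega⟩ →
          g x < g y → g y < g z → χ ![x, y, z] = 1)
    (h2 : ∃ g : Fin m → ℕ, Set.InjOn g {x : Fin m | x ≠ ⟨m - 1, by omega⟩} ∧
        ∀ x y z : Fin m, x ≠ ⟨m - 1, by omega⟩ → y ≠ ⟨m - 1, by omega⟩ →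
          z ≠ ⟨m - 1, by omega⟩ → g x < g y → g y < g z → χ ![x, y, z] = 1) :
    ¬∃ v : Fin m → ℤ, IsVector χ v ∧ v ≠ 0 ∧ ∀ e : Fin m, 0 ≤ v e := by
  obtain ⟨hB1, -, hperm, hB3⟩ := hχ
  rintro ⟨v, hv, hv0, hvpos⟩
  suffices hcirc : ∀ c : Fin m → ℤ, IsCircuit χ c → ∃ e, c e < 0 by
    obtain ⟨e, he⟩ := signcomp_neg hcirc hv hv0
    exact absurd (hvpos e) (by omega)
  intro c hc
  by_contra hneg
  push_neg at hneg
  obtain ⟨hc0, t, heq, hout⟩ := hc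
  have e0 : Fin m := ⟨0, by omega⟩
  obtain ⟨g1, hg1inj, hg1alt⟩ := h1
  obtain ⟨g2, hg2inj, hg2alt⟩ := h2
  set e0 : Fin m := ⟨0, by omega⟩ with he0def
  set em : Fin m := ⟨m - 1, by omega⟩ with hemdef
  have hem0 : e0 ≠ em := by
    simp only [he0def, hemdef, Ne, Fin.mk.injEq]; omega
  have hinj : Function.Injective t := circuit_inj χ hperm c t hc0 heq hout
  have h0 := heq 0; have h1' := heq 1; have h2' := heq 2; have h3' := heq 3
  rw [del0] at h0; rw [del1] at h1'; rw [del2] at h2'; rw [del3] at h3'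
  simp only [Fin.val_zero, Fin.val_one, Fin.val_two,
    show ((3:Fin 4):ℕ)=3 from rfl] at h0 h1' h2' h3'
  norm_num at h0 h1' h2' h3'
  -- value oracles for the two alternating regions
  have hg1ne : ∀ a b : Fin m, a ≠ e0 → b ≠ e0 → a ≠ b → g1 a ≠ g1 b := by
    intro a b ha hb hab hg
    exact hab (hg1inj ha hb hg)
  have hg2ne : ∀ a b : Fin m, a ≠ em → b ≠ em → a ≠ b → g2 a ≠ g2 b := by
    intro a b ha hb hab hg
    exact hab (hg2inj ha hb hg)
  have hosign1 : ∀ a b c : Fin m, a ≠ e0 → b ≠ e0 → c ≠ e0 → a ≠ b → a ≠ c → b ≠ c →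
      χ ![a, b, c] = osign (g1 a) (g1 b) (g1 c) := by
    intro a b c ha hb hcc hab hac hbc
    exact alt_eval χ hperm g1 a b c
      (fun p q r hp hq hr => hg1alt p q r
        (by rcases hp with rfl|rfl|rfl <;> assumption)
        (by rcases hq with rfl|rfl|rfl <;> assumption)
        (by rcases hr with rfl|rfl|rfl <;> assumption))
      (hg1ne a b ha hb hab) (hg1ne a c ha hcc hac) (hg1ne b c hb hcc hbc)
  have hosign2 : ∀ a b c : Fin m, a ≠ em → b ≠ em → c ≠ em → a ≠ b → a ≠ c → b ≠ c →
      χ ![a, b, c] = osign (g2 a) (g2 b) (g2 c) := by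
    intro a b c ha hb hcc hab hac hbc
    exact alt_eval χ hperm g2 a b c
      (fun p q r hp hq hr => hg2alt p q r
        (by rcases hp with rfl|rfl|rfl <;> assumption)
        (by rcases hq with rfl|rfl|rfl <;> assumption)
        (by rcases hr with rfl|rfl|rfl <;> assumption))
      (hg2ne a b ha hb hab) (hg2ne a c ha hcc hac) (hg2ne b c hb hcc hbc)
  have hosign_ne : ∀ x y z : ℕ, osign x y z = 1 ∨ osign x y z = -1 := by
    intro x y z; unfold osign; split_ifs <;> simp
  have hval1 : ∀ a b c : Fin m, a ≠ e0 → b ≠ e0 → c ≠ e0 → a ≠ b → a ≠ c → b ≠ c →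
      χ ![a, b, c] = 1 ∨ χ ![a, b, c] = -1 := by
    intro a b c ha hb hcc hab hac hbc
    rw [hosign1 a b c ha hb hcc hab hac hbc]; exact hosign_ne _ _ _
  have hval2 : ∀ a b c : Fin m, a ≠ em → b ≠ em → c ≠ em → a ≠ b → a ≠ c → b ≠ c →
      χ ![a, b, c] = 1 ∨ χ ![a, b, c] = -1 := by
    intro a b c ha hb hcc hab hac hbc
    rw [hosign2 a b c ha hb hcc hab hac hbc]; exact hosign_ne _ _ _
  have tne : ∀ a b : Fin 4, a ≠ b → t a ≠ t b := fun a b hab h => hab (hinj h)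
  by_cases hA : ∃ i, t i = e0
  · by_cases hB : ∃ i, t i = em
    · -- circuit contains both e0 and em
      obtain ⟨ie, hie⟩ := hA
      obtain ⟨jf, hjf⟩ := hB
      -- the key lemma
      have keylem : ∀ u v : Fin m, u ≠ e0 → u ≠ em → v ≠ e0 → v ≠ em → u ≠ v →
          χ ![em, u, v] = 1 → χ ![e0, u, v] = -1 →
          χ ![e0, em, u] ≤ 0 → 0 ≤ χ ![e0, em, v] → False := by
        intro u v hu0 hum hv0 hvm huv hfxy hexy hP hQ
        -- find a fifth element z
        obtain ⟨z, hz0, hzm, hzu, hzv⟩ :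
            ∃ z : Fin m, z ≠ e0 ∧ z ≠ em ∧ z ≠ u ∧ z ≠ v := by
          by_contra hno
          push_neg at hno
          have hsub : (Finset.univ : Finset (Fin m)) ⊆ {e0, em, u, v} := by
            intro w _
            rcases eq_or_ne w e0 with rfl | h1
            · simp
            rcases eq_or_ne w em with rfl | h2
            · simp
            rcases eq_or_ne w u with rfl | h3
            · simp
            · simp [hno w h1 h2 h3]
          have hle := Finset.card_le_card hsub
          rw [Finset.card_univ, Fintype.card_fin] at hle
          have : ({e0, em, u, v} : Finset (Fin m)).card ≤ 4 := by
            apply le_trans (Finset.card_insert_le _ _)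
            have : ({em, u, v} : Finset (Fin m)).card ≤ 3 := by
              apply le_trans (Finset.card_insert_le _ _)
              have : ({u, v} : Finset (Fin m)).card ≤ 2 := by
                apply le_trans (Finset.card_insert_le _ _)
                simp
              omega
            omega
          omega
        have w1 : χ ![em, u, v] = osign (g1 em) (g1 u) (g1 v) :=
          hosign1 em u v (Ne.symm hem0) hu0 hv0 (Ne.symm hum) (Ne.symm hvm) huv
        have w2 : χ ![em, u, z] = osign (g1 em) (g1 u) (g1 z) :=
          hosign1 em u z (Ne.symm hem0) hu0 hz0 (Ne.symm hum) (Ne.symm hzm) (Ne.symm hzu)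
        have w3 : χ ![em, v, z] = osign (g1 em) (g1 v) (g1 z) :=
          hosign1 em v z (Ne.symm hem0) hv0 hz0 (Ne.symm hvm) (Ne.symm hzm) (Ne.symm hzv)
        have w4 : χ ![u, v, z] = osign (g1 u) (g1 v) (g1 z) :=
          hosign1 u v z hu0 hv0 hz0 huv (Ne.symm hzu) (Ne.symm hzv)
        have w5 : χ ![e0, u, v] = osign (g2 e0) (g2 u) (g2 v) :=
          hosign2 e0 u v hem0 hum hvm (Ne.symm hu0) (Ne.symm hv0) huv
        have w6 : χ ![e0, u, z] = osign (g2 e0) (g2 u) (g2 z) :=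
          hosign2 e0 u z hem0 hum hzm (Ne.symm hu0) (Ne.symm hz0) (Ne.symm hzu)
        have w7 : χ ![e0, v, z] = osign (g2 e0) (g2 v) (g2 z) :=
          hosign2 e0 v z hem0 hvm hzm (Ne.symm hv0) (Ne.symm hz0) (Ne.symm hzv)
        have w8 : χ ![u, v, z] = osign (g2 u) (g2 v) (g2 z) :=
          hosign2 u v z hum hvm hzm huv (Ne.symm hzu) (Ne.symm hzv)
        have hsF := sideF (g1 em) (g1 u) (g1 v) (g1 z) (by omega)
        have hsE := sideE (g2 e0) (g2 u) (g2 v) (g2 z) (by omega)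
        rcases hsF with ⟨a1, a2, a3⟩ | ⟨a1, a2, a3⟩ | ⟨a1, a2, a3⟩ <;>
          rcases hsE with ⟨b1, b2, b3⟩ | ⟨b1, b2, b3⟩ | ⟨b1, b2, b3⟩ <;>
          first
          | omega
          | exact pat0 χ hperm hB3 e0 em u v z hfxy hexy hQ
              (by omega) (by omega) (by omega)
          | exact pat1 χ hperm hB3 e0 em u v z hfxy hexy hP
              (by omega) (by omega) (by omega)
          | exact pat2 χ hperm hB3 e0 em u v z hfxy hexy hQ
              (by omega) (by omega) (by omega)
          | exact pat3 χ hperm hB3 e0 em u v z hfxy hexy hP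
              (by omega) (by omega) (by omega)
      have hfour : ∀ k : Fin 4, k = 0 ∨ k = 1 ∨ k = 2 ∨ k = 3 := by decide
      have hiejf : ie ≠ jf := by
        intro h; rw [h, hjf] at hie; exact hem0 hie.symm
      rcases hfour ie with rfl|rfl|rfl|rfl <;> rcases hfour jf with rfl|rfl|rfl|rfl
      · exact absurd rfl hiejf
      · -- case ie=0, jf=1: t = (e0, em, (t 2), (t 3))
        simp only [hie, hjf] at h0 h1' h2' h3'
        have hne0_2 : (t 2) ≠ e0 := fun hh => absurd (hinj (hh.trans hie.symm)) (by decide)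
        have hnem_2 : (t 2) ≠ em := fun hh => absurd (hinj (hh.trans hjf.symm)) (by decide)
        have hne0_3 : (t 3) ≠ e0 := fun hh => absurd (hinj (hh.trans hie.symm)) (by decide)
        have hnem_3 : (t 3) ≠ em := fun hh => absurd (hinj (hh.trans hjf.symm)) (by decide)
        have hneuv : (t 2) ≠ (t 3) := fun hh => absurd (hinj hh) (by decide)
        have hfxy : χ ![em, (t 2), (t 3)] = 1 := by have hn := hneg e0; rcases hval1 em (t 2) (t 3) (Ne.symm hem0) hne0_2 hne0_3 (Ne.symm hnem_2) (Ne.symm hnem_3) hneuv with d|d <;> omega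
        have hexy : χ ![e0, (t 2), (t 3)] = -1 := by have hn := hneg em; rcases hval2 e0 (t 2) (t 3) hem0 hnem_2 hnem_3 (Ne.symm hne0_2) (Ne.symm hne0_3) hneuv with d|d <;> omega
        have hQ : 0 ≤ χ ![e0, em, (t 3)] := by have hn := hneg (t 2); omega
        have hP : χ ![e0, em, (t 2)] ≤ 0 := by have hn := hneg (t 3); omega
        exact keylem (t 2) (t 3) hne0_2 hnem_2 hne0_3 hnem_3 hneuv hfxy hexy hP hQ
      · -- case ie=0, jf=2: t = (e0, (t 1), em, (t 3))
        simp only [hie, hjf] at h0 h1' h2' h3'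
        have hne0_1 : (t 1) ≠ e0 := fun hh => absurd (hinj (hh.trans hie.symm)) (by decide)
        have hnem_1 : (t 1) ≠ em := fun hh => absurd (hinj (hh.trans hjf.symm)) (by decide)
        have hne0_3 : (t 3) ≠ e0 := fun hh => absurd (hinj (hh.trans hie.symm)) (by decide)
        have hnem_3 : (t 3) ≠ em := fun hh => absurd (hinj (hh.trans hjf.symm)) (by decide)
        have hneuv : (t 1) ≠ (t 3) := fun hh => absurd (hinj hh) (by decide)
        have ep1 : χ ![(t 1), em, (t 3)] = χ ![em, (t 3), (t 1)] := chi_cyc χ hperm em (t 3) (t 1)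
        have hfxy : χ ![em, (t 3), (t 1)] = 1 := by have hn := hneg e0; rcases hval1 em (t 3) (t 1) (Ne.symm hem0) hne0_3 hne0_1 (Ne.symm hnem_3) (Ne.symm hnem_1) (Ne.symm hneuv) with d|d <;> omega
        have ep2 : χ ![e0, (t 1), (t 3)] = -χ ![e0, (t 3), (t 1)] := chi_swap12 χ hperm e0 (t 3) (t 1)
        have hexy : χ ![e0, (t 3), (t 1)] = -1 := by have hn := hneg em; rcases hval2 e0 (t 3) (t 1) hem0 hnem_3 hnem_1 (Ne.symm hne0_3) (Ne.symm hne0_1) (Ne.symm hneuv) with d|d <;> omega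
        have ep3 : χ ![e0, (t 1), em] = -χ ![e0, em, (t 1)] := chi_swap12 χ hperm e0 em (t 1)
        have hQ : 0 ≤ χ ![e0, em, (t 1)] := by have hn := hneg (t 3); omega
        have hP : χ ![e0, em, (t 3)] ≤ 0 := by have hn := hneg (t 1); omega
        exact keylem (t 3) (t 1) hne0_3 hnem_3 hne0_1 hnem_1 (Ne.symm hneuv) hfxy hexy hP hQ
      · -- case ie=0, jf=3: t = (e0, (t 1), (t 2), em)
        simp only [hie, hjf] at h0 h1' h2' h3'
        have hne0_1 : (t 1) ≠ e0 := fun hh => absurd (hinj (hh.trans hie.symm)) (by decide)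
        have hnem_1 : (t 1) ≠ em := fun hh => absurd (hinj (hh.trans hjf.symm)) (by decide)
        have hne0_2 : (t 2) ≠ e0 := fun hh => absurd (hinj (hh.trans hie.symm)) (by decide)
        have hnem_2 : (t 2) ≠ em := fun hh => absurd (hinj (hh.trans hjf.symm)) (by decide)
        have hneuv : (t 1) ≠ (t 2) := fun hh => absurd (hinj hh) (by decide)
        have ep4 : χ ![em, (t 1), (t 2)] = χ ![(t 1), (t 2), em] := chi_cyc χ hperm (t 1) (t 2) em
        have hfxy : χ ![em, (t 1), (t 2)] = 1 := by have hn := hneg e0; rcases hval1 em (t 1) (t 2) (Ne.symm hem0) hne0_1 hne0_2 (Ne.symm hnem_1) (Ne.symm hnem_2) hneuv with d|d <;> omega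
        have hexy : χ ![e0, (t 1), (t 2)] = -1 := by have hn := hneg em; rcases hval2 e0 (t 1) (t 2) hem0 hnem_1 hnem_2 (Ne.symm hne0_1) (Ne.symm hne0_2) hneuv with d|d <;> omega
        have ep5 : χ ![e0, (t 2), em] = -χ ![e0, em, (t 2)] := chi_swap12 χ hperm e0 em (t 2)
        have hQ : 0 ≤ χ ![e0, em, (t 2)] := by have hn := hneg (t 1); omega
        have ep6 : χ ![e0, (t 1), em] = -χ ![e0, em, (t 1)] := chi_swap12 χ hperm e0 em (t 1)
        have hP : χ ![e0, em, (t 1)] ≤ 0 := by have hn := hneg (t 2); omega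
        exact keylem (t 1) (t 2) hne0_1 hnem_1 hne0_2 hnem_2 hneuv hfxy hexy hP hQ
      · -- case ie=1, jf=0: t = (em, e0, (t 2), (t 3))
        simp only [hie, hjf] at h0 h1' h2' h3'
        have hne0_2 : (t 2) ≠ e0 := fun hh => absurd (hinj (hh.trans hie.symm)) (by decide)
        have hnem_2 : (t 2) ≠ em := fun hh => absurd (hinj (hh.trans hjf.symm)) (by decide)
        have hne0_3 : (t 3) ≠ e0 := fun hh => absurd (hinj (hh.trans hie.symm)) (by decide)
        have hnem_3 : (t 3) ≠ em := fun hh => absurd (hinj (hh.trans hjf.symm)) (by decide)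
        have hneuv : (t 2) ≠ (t 3) := fun hh => absurd (hinj hh) (by decide)
        have ep7 : χ ![em, (t 2), (t 3)] = -χ ![em, (t 3), (t 2)] := chi_swap12 χ hperm em (t 3) (t 2)
        have hfxy : χ ![em, (t 3), (t 2)] = 1 := by have hn := hneg e0; rcases hval1 em (t 3) (t 2) (Ne.symm hem0) hne0_3 hne0_2 (Ne.symm hnem_3) (Ne.symm hnem_2) (Ne.symm hneuv) with d|d <;> omega
        have ep8 : χ ![e0, (t 2), (t 3)] = -χ ![e0, (t 3), (t 2)] := chi_swap12 χ hperm e0 (t 3) (t 2)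
        have hexy : χ ![e0, (t 3), (t 2)] = -1 := by have hn := hneg em; rcases hval2 e0 (t 3) (t 2) hem0 hnem_3 hnem_2 (Ne.symm hne0_3) (Ne.symm hne0_2) (Ne.symm hneuv) with d|d <;> omega
        have ep9 : χ ![em, e0, (t 2)] = -χ ![e0, em, (t 2)] := chi_swap01 χ hperm e0 em (t 2)
        have hQ : 0 ≤ χ ![e0, em, (t 2)] := by have hn := hneg (t 3); omega
        have ep10 : χ ![em, e0, (t 3)] = -χ ![e0, em, (t 3)] := chi_swap01 χ hperm e0 em (t 3)
        have hP : χ ![e0, em, (t 3)] ≤ 0 := by have hn := hneg (t 2); omega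
        exact keylem (t 3) (t 2) hne0_3 hnem_3 hne0_2 hnem_2 (Ne.symm hneuv) hfxy hexy hP hQ
      · exact absurd rfl hiejf
      · -- case ie=1, jf=2: t = ((t 0), e0, em, (t 3))
        simp only [hie, hjf] at h0 h1' h2' h3'
        have hne0_0 : (t 0) ≠ e0 := fun hh => absurd (hinj (hh.trans hie.symm)) (by decide)
        have hnem_0 : (t 0) ≠ em := fun hh => absurd (hinj (hh.trans hjf.symm)) (by decide)
        have hne0_3 : (t 3) ≠ e0 := fun hh => absurd (hinj (hh.trans hie.symm)) (by decide)
        have hnem_3 : (t 3) ≠ em := fun hh => absurd (hinj (hh.trans hjf.symm)) (by decide)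
        have hneuv : (t 0) ≠ (t 3) := fun hh => absurd (hinj hh) (by decide)
        have ep11 : χ ![(t 0), em, (t 3)] = -χ ![em, (t 0), (t 3)] := chi_swap01 χ hperm em (t 0) (t 3)
        have hfxy : χ ![em, (t 0), (t 3)] = 1 := by have hn := hneg e0; rcases hval1 em (t 0) (t 3) (Ne.symm hem0) hne0_0 hne0_3 (Ne.symm hnem_0) (Ne.symm hnem_3) hneuv with d|d <;> omega
        have ep12 : χ ![(t 0), e0, (t 3)] = -χ ![e0, (t 0), (t 3)] := chi_swap01 χ hperm e0 (t 0) (t 3)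
        have hexy : χ ![e0, (t 0), (t 3)] = -1 := by have hn := hneg em; rcases hval2 e0 (t 0) (t 3) hem0 hnem_0 hnem_3 (Ne.symm hne0_0) (Ne.symm hne0_3) hneuv with d|d <;> omega
        have hQ : 0 ≤ χ ![e0, em, (t 3)] := by have hn := hneg (t 0); omega
        have ep13 : χ ![(t 0), e0, em] = χ ![e0, em, (t 0)] := chi_cyc χ hperm e0 em (t 0)
        have hP : χ ![e0, em, (t 0)] ≤ 0 := by have hn := hneg (t 3); omega
        exact keylem (t 0) (t 3) hne0_0 hnem_0 hne0_3 hnem_3 hneuv hfxy hexy hP hQ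
      · -- case ie=1, jf=3: t = ((t 0), e0, (t 2), em)
        simp only [hie, hjf] at h0 h1' h2' h3'
        have hne0_0 : (t 0) ≠ e0 := fun hh => absurd (hinj (hh.trans hie.symm)) (by decide)
        have hnem_0 : (t 0) ≠ em := fun hh => absurd (hinj (hh.trans hjf.symm)) (by decide)
        have hne0_2 : (t 2) ≠ e0 := fun hh => absurd (hinj (hh.trans hie.symm)) (by decide)
        have hnem_2 : (t 2) ≠ em := fun hh => absurd (hinj (hh.trans hjf.symm)) (by decide)
        have hneuv : (t 0) ≠ (t 2) := fun hh => absurd (hinj hh) (by decide)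
        have ep14 : χ ![(t 0), (t 2), em] = χ ![(t 2), em, (t 0)] := chi_cyc χ hperm (t 2) em (t 0)
        have ep15 : χ ![(t 2), em, (t 0)] = -χ ![em, (t 2), (t 0)] := chi_swap01 χ hperm em (t 2) (t 0)
        have hfxy : χ ![em, (t 2), (t 0)] = 1 := by have hn := hneg e0; rcases hval1 em (t 2) (t 0) (Ne.symm hem0) hne0_2 hne0_0 (Ne.symm hnem_2) (Ne.symm hnem_0) (Ne.symm hneuv) with d|d <;> omega
        have ep16 : χ ![(t 0), e0, (t 2)] = χ ![e0, (t 2), (t 0)] := chi_cyc χ hperm e0 (t 2) (t 0)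
        have hexy : χ ![e0, (t 2), (t 0)] = -1 := by have hn := hneg em; rcases hval2 e0 (t 2) (t 0) hem0 hnem_2 hnem_0 (Ne.symm hne0_2) (Ne.symm hne0_0) (Ne.symm hneuv) with d|d <;> omega
        have ep17 : χ ![(t 0), e0, em] = χ ![e0, em, (t 0)] := chi_cyc χ hperm e0 em (t 0)
        have hQ : 0 ≤ χ ![e0, em, (t 0)] := by have hn := hneg (t 2); omega
        have ep18 : χ ![e0, (t 2), em] = -χ ![e0, em, (t 2)] := chi_swap12 χ hperm e0 em (t 2)
        have hP : χ ![e0, em, (t 2)] ≤ 0 := by have hn := hneg (t 0); omega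
        exact keylem (t 2) (t 0) hne0_2 hnem_2 hne0_0 hnem_0 (Ne.symm hneuv) hfxy hexy hP hQ
      · -- case ie=2, jf=0: t = (em, (t 1), e0, (t 3))
        simp only [hie, hjf] at h0 h1' h2' h3'
        have hne0_1 : (t 1) ≠ e0 := fun hh => absurd (hinj (hh.trans hie.symm)) (by decide)
        have hnem_1 : (t 1) ≠ em := fun hh => absurd (hinj (hh.trans hjf.symm)) (by decide)
        have hne0_3 : (t 3) ≠ e0 := fun hh => absurd (hinj (hh.trans hie.symm)) (by decide)
        have hnem_3 : (t 3) ≠ em := fun hh => absurd (hinj (hh.trans hjf.symm)) (by decide)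
        have hneuv : (t 1) ≠ (t 3) := fun hh => absurd (hinj hh) (by decide)
        have hfxy : χ ![em, (t 1), (t 3)] = 1 := by have hn := hneg e0; rcases hval1 em (t 1) (t 3) (Ne.symm hem0) hne0_1 hne0_3 (Ne.symm hnem_1) (Ne.symm hnem_3) hneuv with d|d <;> omega
        have ep19 : χ ![(t 1), e0, (t 3)] = -χ ![e0, (t 1), (t 3)] := chi_swap01 χ hperm e0 (t 1) (t 3)
        have hexy : χ ![e0, (t 1), (t 3)] = -1 := by have hn := hneg em; rcases hval2 e0 (t 1) (t 3) hem0 hnem_1 hnem_3 (Ne.symm hne0_1) (Ne.symm hne0_3) hneuv with d|d <;> omega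
        have ep20 : χ ![em, e0, (t 3)] = -χ ![e0, em, (t 3)] := chi_swap01 χ hperm e0 em (t 3)
        have hQ : 0 ≤ χ ![e0, em, (t 3)] := by have hn := hneg (t 1); omega
        have ep21 : χ ![e0, em, (t 1)] = χ ![em, (t 1), e0] := chi_cyc χ hperm em (t 1) e0
        have hP : χ ![e0, em, (t 1)] ≤ 0 := by have hn := hneg (t 3); omega
        exact keylem (t 1) (t 3) hne0_1 hnem_1 hne0_3 hnem_3 hneuv hfxy hexy hP hQ
      · -- case ie=2, jf=1: t = ((t 0), em, e0, (t 3))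
        simp only [hie, hjf] at h0 h1' h2' h3'
        have hne0_0 : (t 0) ≠ e0 := fun hh => absurd (hinj (hh.trans hie.symm)) (by decide)
        have hnem_0 : (t 0) ≠ em := fun hh => absurd (hinj (hh.trans hjf.symm)) (by decide)
        have hne0_3 : (t 3) ≠ e0 := fun hh => absurd (hinj (hh.trans hie.symm)) (by decide)
        have hnem_3 : (t 3) ≠ em := fun hh => absurd (hinj (hh.trans hjf.symm)) (by decide)
        have hneuv : (t 0) ≠ (t 3) := fun hh => absurd (hinj hh) (by decide)
        have ep22 : χ ![(t 0), em, (t 3)] = χ ![em, (t 3), (t 0)] := chi_cyc χ hperm em (t 3) (t 0)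
        have hfxy : χ ![em, (t 3), (t 0)] = 1 := by have hn := hneg e0; rcases hval1 em (t 3) (t 0) (Ne.symm hem0) hne0_3 hne0_0 (Ne.symm hnem_3) (Ne.symm hnem_0) (Ne.symm hneuv) with d|d <;> omega
        have ep23 : χ ![(t 0), e0, (t 3)] = χ ![e0, (t 3), (t 0)] := chi_cyc χ hperm e0 (t 3) (t 0)
        have hexy : χ ![e0, (t 3), (t 0)] = -1 := by have hn := hneg em; rcases hval2 e0 (t 3) (t 0) hem0 hnem_3 hnem_0 (Ne.symm hne0_3) (Ne.symm hne0_0) (Ne.symm hneuv) with d|d <;> omega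
        have ep24 : χ ![(t 0), em, e0] = χ ![em, e0, (t 0)] := chi_cyc χ hperm em e0 (t 0)
        have ep25 : χ ![em, e0, (t 0)] = -χ ![e0, em, (t 0)] := chi_swap01 χ hperm e0 em (t 0)
        have hQ : 0 ≤ χ ![e0, em, (t 0)] := by have hn := hneg (t 3); omega
        have ep26 : χ ![em, e0, (t 3)] = -χ ![e0, em, (t 3)] := chi_swap01 χ hperm e0 em (t 3)
        have hP : χ ![e0, em, (t 3)] ≤ 0 := by have hn := hneg (t 0); omega
        exact keylem (t 3) (t 0) hne0_3 hnem_3 hne0_0 hnem_0 (Ne.symm hneuv) hfxy hexy hP hQ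
      · exact absurd rfl hiejf
      · -- case ie=2, jf=3: t = ((t 0), (t 1), e0, em)
        simp only [hie, hjf] at h0 h1' h2' h3'
        have hne0_0 : (t 0) ≠ e0 := fun hh => absurd (hinj (hh.trans hie.symm)) (by decide)
        have hnem_0 : (t 0) ≠ em := fun hh => absurd (hinj (hh.trans hjf.symm)) (by decide)
        have hne0_1 : (t 1) ≠ e0 := fun hh => absurd (hinj (hh.trans hie.symm)) (by decide)
        have hnem_1 : (t 1) ≠ em := fun hh => absurd (hinj (hh.trans hjf.symm)) (by decide)
        have hneuv : (t 0) ≠ (t 1) := fun hh => absurd (hinj hh) (by decide)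
        have ep27 : χ ![em, (t 0), (t 1)] = χ ![(t 0), (t 1), em] := chi_cyc χ hperm (t 0) (t 1) em
        have hfxy : χ ![em, (t 0), (t 1)] = 1 := by have hn := hneg e0; rcases hval1 em (t 0) (t 1) (Ne.symm hem0) hne0_0 hne0_1 (Ne.symm hnem_0) (Ne.symm hnem_1) hneuv with d|d <;> omega
        have ep28 : χ ![e0, (t 0), (t 1)] = χ ![(t 0), (t 1), e0] := chi_cyc χ hperm (t 0) (t 1) e0
        have hexy : χ ![e0, (t 0), (t 1)] = -1 := by have hn := hneg em; rcases hval2 e0 (t 0) (t 1) hem0 hnem_0 hnem_1 (Ne.symm hne0_0) (Ne.symm hne0_1) hneuv with d|d <;> omega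
        have ep29 : χ ![(t 1), e0, em] = χ ![e0, em, (t 1)] := chi_cyc χ hperm e0 em (t 1)
        have hQ : 0 ≤ χ ![e0, em, (t 1)] := by have hn := hneg (t 0); omega
        have ep30 : χ ![(t 0), e0, em] = χ ![e0, em, (t 0)] := chi_cyc χ hperm e0 em (t 0)
        have hP : χ ![e0, em, (t 0)] ≤ 0 := by have hn := hneg (t 1); omega
        exact keylem (t 0) (t 1) hne0_0 hnem_0 hne0_1 hnem_1 hneuv hfxy hexy hP hQ
      · -- case ie=3, jf=0: t = (em, (t 1), (t 2), e0)
        simp only [hie, hjf] at h0 h1' h2' h3'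
        have hne0_1 : (t 1) ≠ e0 := fun hh => absurd (hinj (hh.trans hie.symm)) (by decide)
        have hnem_1 : (t 1) ≠ em := fun hh => absurd (hinj (hh.trans hjf.symm)) (by decide)
        have hne0_2 : (t 2) ≠ e0 := fun hh => absurd (hinj (hh.trans hie.symm)) (by decide)
        have hnem_2 : (t 2) ≠ em := fun hh => absurd (hinj (hh.trans hjf.symm)) (by decide)
        have hneuv : (t 1) ≠ (t 2) := fun hh => absurd (hinj hh) (by decide)
        have ep31 : χ ![em, (t 1), (t 2)] = -χ ![em, (t 2), (t 1)] := chi_swap12 χ hperm em (t 2) (t 1)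
        have hfxy : χ ![em, (t 2), (t 1)] = 1 := by have hn := hneg e0; rcases hval1 em (t 2) (t 1) (Ne.symm hem0) hne0_2 hne0_1 (Ne.symm hnem_2) (Ne.symm hnem_1) (Ne.symm hneuv) with d|d <;> omega
        have ep32 : χ ![(t 1), (t 2), e0] = χ ![(t 2), e0, (t 1)] := chi_cyc χ hperm (t 2) e0 (t 1)
        have ep33 : χ ![(t 2), e0, (t 1)] = -χ ![e0, (t 2), (t 1)] := chi_swap01 χ hperm e0 (t 2) (t 1)
        have hexy : χ ![e0, (t 2), (t 1)] = -1 := by have hn := hneg em; rcases hval2 e0 (t 2) (t 1) hem0 hnem_2 hnem_1 (Ne.symm hne0_2) (Ne.symm hne0_1) (Ne.symm hneuv) with d|d <;> omega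
        have ep34 : χ ![e0, em, (t 1)] = χ ![em, (t 1), e0] := chi_cyc χ hperm em (t 1) e0
        have hQ : 0 ≤ χ ![e0, em, (t 1)] := by have hn := hneg (t 2); omega
        have ep35 : χ ![e0, em, (t 2)] = χ ![em, (t 2), e0] := chi_cyc χ hperm em (t 2) e0
        have hP : χ ![e0, em, (t 2)] ≤ 0 := by have hn := hneg (t 1); omega
        exact keylem (t 2) (t 1) hne0_2 hnem_2 hne0_1 hnem_1 (Ne.symm hneuv) hfxy hexy hP hQ
      · -- case ie=3, jf=1: t = ((t 0), em, (t 2), e0)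
        simp only [hie, hjf] at h0 h1' h2' h3'
        have hne0_0 : (t 0) ≠ e0 := fun hh => absurd (hinj (hh.trans hie.symm)) (by decide)
        have hnem_0 : (t 0) ≠ em := fun hh => absurd (hinj (hh.trans hjf.symm)) (by decide)
        have hne0_2 : (t 2) ≠ e0 := fun hh => absurd (hinj (hh.trans hie.symm)) (by decide)
        have hnem_2 : (t 2) ≠ em := fun hh => absurd (hinj (hh.trans hjf.symm)) (by decide)
        have hneuv : (t 0) ≠ (t 2) := fun hh => absurd (hinj hh) (by decide)
        have ep36 : χ ![(t 0), em, (t 2)] = -χ ![em, (t 0), (t 2)] := chi_swap01 χ hperm em (t 0) (t 2)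
        have hfxy : χ ![em, (t 0), (t 2)] = 1 := by have hn := hneg e0; rcases hval1 em (t 0) (t 2) (Ne.symm hem0) hne0_0 hne0_2 (Ne.symm hnem_0) (Ne.symm hnem_2) hneuv with d|d <;> omega
        have ep37 : χ ![e0, (t 0), (t 2)] = χ ![(t 0), (t 2), e0] := chi_cyc χ hperm (t 0) (t 2) e0
        have hexy : χ ![e0, (t 0), (t 2)] = -1 := by have hn := hneg em; rcases hval2 e0 (t 0) (t 2) hem0 hnem_0 hnem_2 (Ne.symm hne0_0) (Ne.symm hne0_2) hneuv with d|d <;> omega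
        have ep38 : χ ![e0, em, (t 2)] = χ ![em, (t 2), e0] := chi_cyc χ hperm em (t 2) e0
        have hQ : 0 ≤ χ ![e0, em, (t 2)] := by have hn := hneg (t 0); omega
        have ep39 : χ ![(t 0), em, e0] = χ ![em, e0, (t 0)] := chi_cyc χ hperm em e0 (t 0)
        have ep40 : χ ![em, e0, (t 0)] = -χ ![e0, em, (t 0)] := chi_swap01 χ hperm e0 em (t 0)
        have hP : χ ![e0, em, (t 0)] ≤ 0 := by have hn := hneg (t 2); omega
        exact keylem (t 0) (t 2) hne0_0 hnem_0 hne0_2 hnem_2 hneuv hfxy hexy hP hQ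
      · -- case ie=3, jf=2: t = ((t 0), (t 1), em, e0)
        simp only [hie, hjf] at h0 h1' h2' h3'
        have hne0_0 : (t 0) ≠ e0 := fun hh => absurd (hinj (hh.trans hie.symm)) (by decide)
        have hnem_0 : (t 0) ≠ em := fun hh => absurd (hinj (hh.trans hjf.symm)) (by decide)
        have hne0_1 : (t 1) ≠ e0 := fun hh => absurd (hinj (hh.trans hie.symm)) (by decide)
        have hnem_1 : (t 1) ≠ em := fun hh => absurd (hinj (hh.trans hjf.symm)) (by decide)
        have hneuv : (t 0) ≠ (t 1) := fun hh => absurd (hinj hh) (by decide)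
        have ep41 : χ ![(t 0), (t 1), em] = χ ![(t 1), em, (t 0)] := chi_cyc χ hperm (t 1) em (t 0)
        have ep42 : χ ![(t 1), em, (t 0)] = -χ ![em, (t 1), (t 0)] := chi_swap01 χ hperm em (t 1) (t 0)
        have hfxy : χ ![em, (t 1), (t 0)] = 1 := by have hn := hneg e0; rcases hval1 em (t 1) (t 0) (Ne.symm hem0) hne0_1 hne0_0 (Ne.symm hnem_1) (Ne.symm hnem_0) (Ne.symm hneuv) with d|d <;> omega
        have ep43 : χ ![(t 0), (t 1), e0] = χ ![(t 1), e0, (t 0)] := chi_cyc χ hperm (t 1) e0 (t 0)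
        have ep44 : χ ![(t 1), e0, (t 0)] = -χ ![e0, (t 1), (t 0)] := chi_swap01 χ hperm e0 (t 1) (t 0)
        have hexy : χ ![e0, (t 1), (t 0)] = -1 := by have hn := hneg em; rcases hval2 e0 (t 1) (t 0) hem0 hnem_1 hnem_0 (Ne.symm hne0_1) (Ne.symm hne0_0) (Ne.symm hneuv) with d|d <;> omega
        have ep45 : χ ![(t 0), em, e0] = χ ![em, e0, (t 0)] := chi_cyc χ hperm em e0 (t 0)
        have ep46 : χ ![em, e0, (t 0)] = -χ ![e0, em, (t 0)] := chi_swap01 χ hperm e0 em (t 0)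
        have hQ : 0 ≤ χ ![e0, em, (t 0)] := by have hn := hneg (t 1); omega
        have ep47 : χ ![(t 1), em, e0] = χ ![em, e0, (t 1)] := chi_cyc χ hperm em e0 (t 1)
        have ep48 : χ ![em, e0, (t 1)] = -χ ![e0, em, (t 1)] := chi_swap01 χ hperm e0 em (t 1)
        have hP : χ ![e0, em, (t 1)] ≤ 0 := by have hn := hneg (t 0); omega
        exact keylem (t 1) (t 0) hne0_1 hnem_1 hne0_0 hnem_0 (Ne.symm hneuv) hfxy hexy hP hQ
      · exact absurd rfl hiejf
    · -- circuit avoids em : use region 2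
      push_neg at hB
      have q0 : χ ![t 1, t 2, t 3] = osign (g2 (t 1)) (g2 (t 2)) (g2 (t 3)) :=
        hosign2 _ _ _ (hB 1) (hB 2) (hB 3)
          (tne 1 2 (by decide)) (tne 1 3 (by decide)) (tne 2 3 (by decide))
      have q1 : χ ![t 0, t 2, t 3] = osign (g2 (t 0)) (g2 (t 2)) (g2 (t 3)) :=
        hosign2 _ _ _ (hB 0) (hB 2) (hB 3)
          (tne 0 2 (by decide)) (tne 0 3 (by decide)) (tne 2 3 (by decide))
      have q2 : χ ![t 0, t 1, t 3] = osign (g2 (t 0)) (g2 (t 1)) (g2 (t 3)) :=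
        hosign2 _ _ _ (hB 0) (hB 1) (hB 3)
          (tne 0 1 (by decide)) (tne 0 3 (by decide)) (tne 1 3 (by decide))
      have q3 : χ ![t 0, t 1, t 2] = osign (g2 (t 0)) (g2 (t 1)) (g2 (t 2)) :=
        hosign2 _ _ _ (hB 0) (hB 1) (hB 2)
          (tne 0 1 (by decide)) (tne 0 2 (by decide)) (tne 1 2 (by decide))
      have n0 := hneg (t 0); have n1 := hneg (t 1)
      have n2 := hneg (t 2); have n3 := hneg (t 3)
      rw [h0, q0] at n0; rw [h1', q1] at n1; rw [h2', q2] at n2; rw [h3', q3] at n3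
      unfold osign at n0 n1 n2 n3
      split_ifs at n0 n1 n2 n3 <;> omega
  · -- circuit avoids e0 : use region 1
    push_neg at hA
    have q0 : χ ![t 1, t 2, t 3] = osign (g1 (t 1)) (g1 (t 2)) (g1 (t 3)) :=
      hosign1 _ _ _ (hA 1) (hA 2) (hA 3)
        (tne 1 2 (by decide)) (tne 1 3 (by decide)) (tne 2 3 (by decide))
    have q1 : χ ![t 0, t 2, t 3] = osign (g1 (t 0)) (g1 (t 2)) (g1 (t 3)) :=
      hosign1 _ _ _ (hA 0) (hA 2) (hA 3)
        (tne 0 2 (by decide)) (tne 0 3 (by decide)) (tne 2 3 (by decide))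
    have q2 : χ ![t 0, t 1, t 3] = osign (g1 (t 0)) (g1 (t 1)) (g1 (t 3)) :=
      hosign1 _ _ _ (hA 0) (hA 1) (hA 3)
        (tne 0 1 (by decide)) (tne 0 3 (by decide)) (tne 1 3 (by decide))
    have q3 : χ ![t 0, t 1, t 2] = osign (g1 (t 0)) (g1 (t 1)) (g1 (t 2)) :=
      hosign1 _ _ _ (hA 0) (hA 1) (hA 2)
        (tne 0 1 (by decide)) (tne 0 2 (by decide)) (tne 1 2 (by decide))
    have n0 := hneg (t 0); have n1 := hneg (t 1)
    have n2 := hneg (t 2); have n3 := hneg (t 3)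
    rw [h0, q0] at n0; rw [h1', q1] at n1; rw [h2', q2] at n2; rw [h3', q3] at n3
    unfold osign at n0 n1 n2 n3
    split_ifs at n0 n1 n2 n3 <;> omega
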